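/- For a simplicial map f : B → A and a face σ of A, the dual complex with respect to f, D(σ,f) := (βf)^{-1}_*(D(σ,A)) = { {τ₀ ⊆ ⋯ ⊆ τ_k} : τ_i ∈ B, σ ⊆ f_*(τ₀) }, is a subcomplex of βB, and it collapses to the subcomplex (βf)^{-1}_*({σ}) of βB (i.e., to the chains all of whose members map onto σ under f_*). -/

import Mathlib

/-- An abstract simplicial complex: a family of finite nonempty sets closed under
taking nonempty subsets. -/
def IsComplex {V : Type*} (C : Set (Finset V)) : Prop :=
  (∀ σ ∈ C, σ.Nonempty) ∧ ∀ σ ∈ C, ∀ τ : Finset V, τ ⊆ σ → τ.Nonempty → τ ∈ C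

/-- The barycentric subdivision of `C`: vertices are the faces of `C`, and faces
are the nonempty finite chains of faces of `C` under inclusion. -/
def bary {V : Type*} (C : Set (Finset V)) : Set (Finset (Finset V)) :=
  { S | S.Nonempty ∧ (↑S : Set (Finset V)) ⊆ C ∧ IsChain (· ⊆ ·) (↑S : Set (Finset V)) }

/-- `f` is a simplicial map from `C` to `D`: the image of every face of `C` is a face of `D`. -/
def IsSimplicial {V W : Type*} [DecidableEq W]
    (C : Set (Finset V)) (D : Set (Finset W)) (f : V → W) : Prop :=
  ∀ σ ∈ C, σ.image f ∈ D


/-- An elementary collapse: remove a free face `ρ` together with the unique face `τ`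
properly containing it. -/
def ElemCollapse {X : Type*} (C C' : Set (Finset X)) : Prop :=
  ∃ ρ τ : Finset X, ρ ∈ C ∧ τ ∈ C ∧ ρ ⊂ τ ∧ (∀ γ ∈ C, ρ ⊂ γ → γ = τ) ∧
    C' = C \ {ρ, τ}

/-- `C` collapses to `D`: `D` is reached from `C` by a finite sequence of elementary
collapses. -/
def Collapses {X : Type*} (C D : Set (Finset X)) : Prop :=
  Relation.ReflTransGen ElemCollapse C D

/-- The dual `D(σ,f)` to `σ` with respect to a simplicial map `f : B → A`: the chains of
faces of `B` all of whose members `τ` satisfy `σ ⊆ f_*(τ)` (equivalently, whose smallest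
member does). -/
def dualMap {V W : Type*} [DecidableEq W] (σ : Finset W) (f : V → W)
    (B : Set (Finset V)) : Set (Finset (Finset V)) :=
  {S ∈ bary B | ∀ τ ∈ S, σ ⊆ τ.image f}

/-- `(βf)^{-1}(σ)`: the chains of faces of `B` all of whose members map onto `σ`. -/
def dualMapPt {V W : Type*} [DecidableEq W] (σ : Finset W) (f : V → W)
    (B : Set (Finset V)) : Set (Finset (Finset V)) :=
  {S ∈ bary B | ∀ τ ∈ S, τ.image f = σ}


theorem collapse_of_list {X : Type*} (l : List (Finset X × Finset X)) :
    ∀ K L : Set (Finset X), L ⊆ K →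
    (∀ p ∈ l, p.1 ∈ K ∧ p.2 ∈ K ∧ p.1 ⊂ p.2 ∧ p.1 ∉ L ∧ p.2 ∉ L) →
    (∀ R ∈ K, R ∉ L → ∃ p ∈ l, R = p.1 ∨ R = p.2) →
    List.Pairwise (fun p q => p.1 ≠ q.1 ∧ p.1 ≠ q.2 ∧ p.2 ≠ q.1 ∧ p.2 ≠ q.2) l →
    (∀ l₁ p l₂, l = l₁ ++ p :: l₂ → ∀ R ∈ K, p.1 ⊂ R → R ≠ p.2 →
      ∃ q ∈ l₁, R = q.1 ∨ R = q.2) →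
    Collapses K L := by
  induction l with
  | nil =>
    intro K L hLK _ hcov _ _
    have : K = L := by
      apply Set.Subset.antisymm _ hLK
      intro R hR
      by_contra hRL
      obtain ⟨p, hp, _⟩ := hcov R hR hRL
      exact List.not_mem_nil hp
    rw [this]
    exact Relation.ReflTransGen.refl
  | cons p t ih =>
    intro K L hLK hpairs hcov hpw horder
    have hp := hpairs p List.mem_cons_self
    set K' : Set (Finset X) := K \ {p.1, p.2} with hK'
    have hfree : ∀ γ ∈ K, p.1 ⊂ γ → γ = p.2 := by
      intro γ hγ hsub
      by_contra hne
      obtain ⟨q, hq, _⟩ := horder [] p t rfl γ hγ hsub hne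
      exact List.not_mem_nil hq
    have hstep : ElemCollapse K K' :=
      ⟨p.1, p.2, hp.1, hp.2.1, hp.2.2.1, hfree, rfl⟩
    have hdist : ∀ q ∈ t, p.1 ≠ q.1 ∧ p.1 ≠ q.2 ∧ p.2 ≠ q.1 ∧ p.2 ≠ q.2 :=
      fun q hq => (List.pairwise_cons.mp hpw).1 q hq
    refine Relation.ReflTransGen.head hstep (ih K' L ?_ ?_ ?_ ?_ ?_)
    · intro R hR
      refine ⟨hLK hR, ?_⟩
      intro h
      rcases h with h | h
      · exact hp.2.2.2.1 (h ▸ hR)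
      · exact hp.2.2.2.2 (h ▸ hR)
    · intro q hq
      have h := hpairs q (List.mem_cons_of_mem p hq)
      have hd := hdist q hq
      refine ⟨⟨h.1, ?_⟩, ⟨h.2.1, ?_⟩, h.2.2.1, h.2.2.2⟩
      · intro hmem; rcases hmem with hmem | hmem
        · exact hd.1 hmem.symm
        · exact hd.2.2.1 hmem.symm
      · intro hmem; rcases hmem with hmem | hmem
        · exact hd.2.1 hmem.symm
        · exact hd.2.2.2 hmem.symm
    · intro R hR hRL
      obtain ⟨q, hq, hRq⟩ := hcov R hR.1 hRL
      rcases List.mem_cons.mp hq with rfl | hq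
      · exfalso
        rcases hRq with rfl | rfl
        · exact hR.2 (Or.inl rfl)
        · exact hR.2 (Or.inr rfl)
      · exact ⟨q, hq, hRq⟩
    · exact (List.pairwise_cons.mp hpw).2
    · intro l₁ q l₂ hl R hR hsub hne
      obtain ⟨r, hr, hRr⟩ := horder (p :: l₁) q l₂ (by rw [hl]; rfl) R hR.1 hsub hne
      rcases List.mem_cons.mp hr with rfl | hr
      · exfalso
        rcases hRr with rfl | rfl
        · exact hR.2 (Or.inl rfl)
        · exact hR.2 (Or.inr rfl)
      · exact ⟨r, hr, hRr⟩

section Helpers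
variable {V W : Type*} [DecidableEq V] [DecidableEq W]

/-- Elements of `S` whose image is not exactly `σ`. -/
def Fn (σ : Finset W) (f : V → W) (S : Finset (Finset V)) : Finset (Finset V) :=
  S.filter (fun τ => τ.image f ≠ σ)

noncomputable def leastOf (F : Finset (Finset V)) : Finset V :=
  if h : ∃ m ∈ F, ∀ x ∈ F, m ⊆ x then h.choose else ∅

noncomputable def mnn (σ : Finset W) (f : V → W) (S : Finset (Finset V)) : Finset V :=
  leastOf (Fn σ f S)

noncomputable def cS (σ : Finset W) (f : V → W) (S : Finset (Finset V)) : Finset V :=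
  (mnn σ f S).filter (fun v => f v ∈ σ)

lemma leastOf_eq {F : Finset (Finset V)} {m : Finset V}
    (hm : m ∈ F) (hle : ∀ x ∈ F, m ⊆ x) : leastOf F = m := by
  have h : ∃ m ∈ F, ∀ x ∈ F, m ⊆ x := ⟨m, hm, hle⟩
  rw [leastOf, dif_pos h]
  obtain ⟨hm', hle'⟩ := h.choose_spec
  exact Finset.Subset.antisymm (hle' m hm) (hle _ hm')

omit [DecidableEq V] in
lemma chain_least {S F : Finset (Finset V)} (hc : IsChain (· ⊆ ·) (↑S : Set (Finset V)))
    (hF : F ⊆ S) (hne : F.Nonempty) : ∃ m ∈ F, ∀ x ∈ F, m ⊆ x := by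
  obtain ⟨m, hm, hmin⟩ := F.exists_min_image Finset.card hne
  refine ⟨m, hm, fun x hx => ?_⟩
  rcases eq_or_ne m x with rfl | hne'
  · exact subset_rfl
  · rcases hc (by exact_mod_cast hF hm) (by exact_mod_cast hF hx) hne' with h | h
    · exact h
    · rw [Finset.eq_of_subset_of_card_le h (hmin x hx)]

variable {σ : Finset W} {f : V → W} {B : Set (Finset V)} {S : Finset (Finset V)}

lemma mnn_spec (hS : S ∈ dualMap σ f B) (hSL : S ∉ dualMapPt σ f B) :
    mnn σ f S ∈ S ∧ (mnn σ f S).image f ≠ σ ∧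
      (∀ x ∈ S, x.image f ≠ σ → mnn σ f S ⊆ x) := by
  obtain ⟨⟨hne, hsubB, hchain⟩, hσsub⟩ := hS
  have hex : ∃ τ ∈ S, τ.image f ≠ σ := by
    by_contra h
    push_neg at h
    exact hSL ⟨⟨hne, hsubB, hchain⟩, h⟩
  obtain ⟨τ, hτ, hτimg⟩ := hex
  obtain ⟨m, hm, hle⟩ := chain_least (F := Fn σ f S) hchain (Finset.filter_subset _ S)
    ⟨τ, Finset.mem_filter.mpr ⟨hτ, hτimg⟩⟩
  have hmnn : mnn σ f S = m := leastOf_eq hm hle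
  rw [hmnn]
  obtain ⟨hmS, hmimg⟩ := Finset.mem_filter.mp hm
  exact ⟨hmS, hmimg, fun x hx hxi => hle x (Finset.mem_filter.mpr ⟨hx, hxi⟩)⟩

lemma cS_spec (hB : IsComplex B) (hσne : σ.Nonempty)
    (hS : S ∈ dualMap σ f B) (hSL : S ∉ dualMapPt σ f B) :
    (cS σ f S).image f = σ ∧ cS σ f S ⊆ mnn σ f S ∧ cS σ f S ∈ B ∧
      cS σ f S ≠ mnn σ f S ∧ (∀ τ ∈ S, τ ⊆ cS σ f S ∨ cS σ f S ⊆ τ) := by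
  obtain ⟨hmS, hmimg, hmle⟩ := mnn_spec hS hSL
  have hσm : σ ⊆ (mnn σ f S).image f := hS.2 _ hmS
  have himg : (cS σ f S).image f = σ := by
    apply Finset.Subset.antisymm
    · intro w hw
      simp only [cS, Finset.mem_image, Finset.mem_filter] at hw
      obtain ⟨v, ⟨_, hv⟩, rfl⟩ := hw
      exact hv
    · intro w hw
      obtain ⟨v, hv, rfl⟩ := Finset.mem_image.mp (hσm hw)
      exact Finset.mem_image.mpr ⟨v, Finset.mem_filter.mpr ⟨hv, hw⟩, rfl⟩
  have hsub : cS σ f S ⊆ mnn σ f S := Finset.filter_subset _ _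
  have hcne : (cS σ f S).Nonempty := by
    rw [← Finset.image_nonempty (f := f), himg]
    exact hσne
  have hcB : cS σ f S ∈ B := hB.2 _ (hS.1.2.1 hmS) _ hsub hcne
  have hneq : cS σ f S ≠ mnn σ f S := by
    intro h
    exact hmimg (h ▸ himg)
  refine ⟨himg, hsub, hcB, hneq, fun τ hτ => ?_⟩
  by_cases hτi : τ.image f = σ
  · -- τ ⊆ cS
    left
    have hτm : τ ≠ mnn σ f S := fun h => hmimg (h ▸ hτi)
    have hcomp := hS.1.2.2 (by exact_mod_cast hτ) (by exact_mod_cast hmS) hτm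
    have hτsub : τ ⊆ mnn σ f S := by
      rcases hcomp with h | h
      · exact h
      · exfalso
        apply hmimg
        have h2 := Finset.image_subset_image (f := f) h
        rw [hτi] at h2
        exact Finset.Subset.antisymm h2 hσm
    intro v hv
    refine Finset.mem_filter.mpr ⟨hτsub hv, ?_⟩
    rw [← hτi]
    exact Finset.mem_image.mpr ⟨v, hv, rfl⟩
  · exact Or.inr (hsub.trans (hmle τ hτ hτi))

end Helpers

section Helpers2
variable {V W : Type*} [DecidableEq V] [DecidableEq W]
variable {σ : Finset W} {f : V → W} {B : Set (Finset V)} {S : Finset (Finset V)} {τ : Finset V}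

lemma Fn_insert_of_img (h : τ.image f = σ) : Fn σ f (insert τ S) = Fn σ f S := by
  rw [Fn, Finset.filter_insert, if_neg (by simp [h])]
  rfl

lemma Fn_insert_of_ne (h : τ.image f ≠ σ) :
    Fn σ f (insert τ S) = insert τ (Fn σ f S) := by
  rw [Fn, Finset.filter_insert, if_pos h]
  rfl

lemma Fn_erase_of_img (h : τ.image f = σ) : Fn σ f (S.erase τ) = Fn σ f S := by
  rw [Fn, Finset.filter_erase, Finset.erase_eq_of_notMem]
  · rfl
  · simp [Finset.mem_filter, h]

lemma mnn_congr {S' : Finset (Finset V)} (h : Fn σ f S = Fn σ f S') :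
    mnn σ f S = mnn σ f S' := by
  rw [mnn, mnn, h]

lemma cS_congr {S' : Finset (Finset V)} (h : Fn σ f S = Fn σ f S') :
    cS σ f S = cS σ f S' := by
  rw [cS, cS, mnn_congr h]

lemma insert_cS_mem (hB : IsComplex B) (hσne : σ.Nonempty)
    (hS : S ∈ dualMap σ f B) (hSL : S ∉ dualMapPt σ f B) :
    insert (cS σ f S) S ∈ dualMap σ f B ∧ insert (cS σ f S) S ∉ dualMapPt σ f B := by
  obtain ⟨himg, hsub, hcB, hneq, hcomp⟩ := cS_spec hB hσne hS hSL
  obtain ⟨hmS, hmimg, _⟩ := mnn_spec hS hSL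
  obtain ⟨⟨hne, hsubB, hchain⟩, hσsub⟩ := hS
  constructor
  · refine ⟨⟨⟨cS σ f S, Finset.mem_insert_self _ _⟩, ?_, ?_⟩, ?_⟩
    · rw [Finset.coe_insert]
      exact Set.insert_subset hcB hsubB
    · rw [Finset.coe_insert]
      refine hchain.insert (fun b hb hne' => ?_)
      rcases hcomp b (by exact_mod_cast hb) with h | h
      · exact Or.inr h
      · exact Or.inl h
    · intro τ' hτ'
      rcases Finset.mem_insert.mp hτ' with rfl | hτ'
      · rw [himg]
      · exact hσsub τ' hτ'
  · intro hPt
    exact hmimg (hPt.2 _ (Finset.mem_insert_of_mem hmS))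

lemma erase_cS_mem (hB : IsComplex B) (hσne : σ.Nonempty)
    (hS : S ∈ dualMap σ f B) (hSL : S ∉ dualMapPt σ f B) :
    S.erase (cS σ f S) ∈ dualMap σ f B ∧ S.erase (cS σ f S) ∉ dualMapPt σ f B := by
  obtain ⟨himg, hsub, hcB, hneq, hcomp⟩ := cS_spec hB hσne hS hSL
  obtain ⟨hmS, hmimg, _⟩ := mnn_spec hS hSL
  obtain ⟨⟨hne, hsubB, hchain⟩, hσsub⟩ := hS
  have hm' : mnn σ f S ∈ S.erase (cS σ f S) :=
    Finset.mem_erase.mpr ⟨fun h => hneq h.symm, hmS⟩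
  have hesub : (↑(S.erase (cS σ f S)) : Set (Finset V)) ⊆ ↑S := by
    exact_mod_cast Finset.erase_subset _ _
  constructor
  · refine ⟨⟨⟨_, hm'⟩, fun x hx => hsubB (hesub hx), fun x hx y hy hxy => hchain (hesub hx) (hesub hy) hxy⟩, fun τ' hτ' => hσsub τ' (Finset.mem_of_mem_erase hτ')⟩
  · intro hPt
    exact hmimg (hPt.2 _ hm')

omit [DecidableEq V] [DecidableEq W] in
lemma mu_aux {a b c d M C : ℕ} (h1 : a < b) (h2 : b ≤ M) (h3 : d < C) :
    (M - b) * C + d < (M - a) * C + c := by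
  have h5 : M - b + 1 ≤ M - a := by omega
  calc (M - b) * C + d < (M - b) * C + C := by omega
    _ = (M - b + 1) * C := by ring
    _ ≤ (M - a) * C := Nat.mul_le_mul_right C h5
    _ ≤ (M - a) * C + c := Nat.le_add_right _ _

end Helpers2

theorem dualMap_collapses {V W : Type*} [DecidableEq V] [DecidableEq W]
    {A : Set (Finset W)} {B : Set (Finset V)}
    (hA : IsComplex A) (hB : IsComplex B) (hBfin : B.Finite)
    (f : V → W) (hf : IsSimplicial B A f)
    {σ : Finset W} (hσ : σ ∈ A) :
    dualMap σ f B ⊆ bary B ∧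
    IsComplex (dualMap σ f B) ∧
    Collapses (dualMap σ f B) (dualMapPt σ f B) := by
  classical
  have hσne : σ.Nonempty := hA.1 σ hσ
  have hsub : dualMap σ f B ⊆ bary B := fun S hS => hS.1
  have hcomplex : IsComplex (dualMap σ f B) := by
    constructor
    · exact fun S hS => hS.1.1
    · intro S hS T hTS hTne
      have hTS' : (↑T : Set (Finset V)) ⊆ ↑S := Finset.coe_subset.mpr hTS
      exact ⟨⟨hTne, fun x hx => hS.1.2.1 (hTS' hx),
        fun x hx y hy hxy => hS.1.2.2 (hTS' hx) (hTS' hy) hxy⟩,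
        fun τ hτ => hS.2 τ (hTS hτ)⟩
  refine ⟨hsub, hcomplex, ?_⟩
  have hLK : dualMapPt σ f B ⊆ dualMap σ f B := fun S hS =>
    ⟨hS.1, fun τ hτ => (hS.2 τ hτ) ▸ subset_rfl⟩
  have hKfin : (dualMap σ f B).Finite := by
    apply Set.Finite.subset (Finset.finite_toSet hBfin.toFinset.powerset)
    intro S hS
    rw [Finset.mem_coe, Finset.mem_powerset]
    intro x hx
    exact hBfin.mem_toFinset.mpr (hS.1.2.1 hx)
  let M : ℕ := hBfin.toFinset.card
  let C : ℕ := (hBfin.toFinset.sup id).card + 1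
  have hcardK : ∀ T ∈ dualMap σ f B, T.card ≤ M := fun T hT =>
    Finset.card_le_card (fun x hx => hBfin.mem_toFinset.mpr (hT.1.2.1 hx))
  have hcardB : ∀ τ ∈ B, τ.card < C := by
    intro τ hτ
    have : τ ⊆ hBfin.toFinset.sup id :=
      Finset.le_sup (f := id) (hBfin.mem_toFinset.mpr hτ)
    have := Finset.card_le_card this
    omega
  let μ : Finset (Finset V) × Finset (Finset V) → ℕ :=
    fun p => (M - p.2.card) * C + (mnn σ f p.1).card
  let r : Finset (Finset V) × Finset (Finset V) → Finset (Finset V) × Finset (Finset V) → Prop :=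
    fun p q => μ p ≤ μ q
  haveI hrdec : DecidableRel r := fun p q => Nat.decLe _ _
  haveI hrtot : IsTotal _ r := ⟨fun p q => Nat.le_total _ _⟩
  haveI hrtrans : IsTrans _ r := ⟨fun a b c => Nat.le_trans⟩
  let LowF : Finset (Finset (Finset V)) :=
    hKfin.toFinset.filter (fun S => S ∉ dualMapPt σ f B ∧ cS σ f S ∉ S)
  let pr : Finset (Finset V) → Finset (Finset V) × Finset (Finset V) :=
    fun S => (S, insert (cS σ f S) S)
  let l : List (Finset (Finset V) × Finset (Finset V)) :=
    List.insertionSort r (LowF.toList.map pr)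
  have hperm : l.Perm (LowF.toList.map pr) := List.perm_insertionSort r _
  have hLowF : ∀ S, S ∈ LowF ↔
      S ∈ dualMap σ f B ∧ S ∉ dualMapPt σ f B ∧ cS σ f S ∉ S := by
    intro S
    rw [Finset.mem_filter, hKfin.mem_toFinset]
  have hmem_l : ∀ p, p ∈ l ↔ ∃ S ∈ LowF, pr S = p := by
    intro p
    rw [hperm.mem_iff, List.mem_map]
    constructor
    · rintro ⟨S, hS, rfl⟩; exact ⟨S, Finset.mem_toList.mp hS, rfl⟩
    · rintro ⟨S, hS, rfl⟩; exact ⟨S, Finset.mem_toList.mpr hS, rfl⟩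
  -- pairs are valid
  have hpairs : ∀ p ∈ l, p.1 ∈ dualMap σ f B ∧ p.2 ∈ dualMap σ f B ∧ p.1 ⊂ p.2 ∧
      p.1 ∉ dualMapPt σ f B ∧ p.2 ∉ dualMapPt σ f B := by
    intro p hp
    obtain ⟨S, hSLow, rfl⟩ := (hmem_l p).mp hp
    obtain ⟨hSK, hSL, hcSS⟩ := (hLowF S).mp hSLow
    have hi := insert_cS_mem hB hσne hSK hSL
    exact ⟨hSK, hi.1, Finset.ssubset_insert hcSS, hSL, hi.2⟩
  -- coverage
  have hcov : ∀ R ∈ dualMap σ f B, R ∉ dualMapPt σ f B →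
      ∃ p ∈ l, R = p.1 ∨ R = p.2 := by
    intro R hR hRL
    by_cases hc : cS σ f R ∈ R
    · have hYK := erase_cS_mem hB hσne hR hRL
      have hFn : Fn σ f (R.erase (cS σ f R)) = Fn σ f R :=
        Fn_erase_of_img (cS_spec hB hσne hR hRL).1
      have hcY : cS σ f (R.erase (cS σ f R)) = cS σ f R := cS_congr hFn
      have hYLow : R.erase (cS σ f R) ∈ LowF := (hLowF _).mpr
        ⟨hYK.1, hYK.2, by rw [hcY]; exact Finset.notMem_erase _ _⟩
      refine ⟨pr (R.erase (cS σ f R)), (hmem_l _).mpr ⟨_, hYLow, rfl⟩, Or.inr ?_⟩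
      show R = insert (cS σ f (R.erase (cS σ f R))) (R.erase (cS σ f R))
      rw [hcY, Finset.insert_erase hc]
    · exact ⟨pr R, (hmem_l _).mpr ⟨R, (hLowF R).mpr ⟨hR, hRL, hc⟩, rfl⟩, Or.inl rfl⟩
  -- pairwise distinctness
  have hpw : List.Pairwise
      (fun p q => p.1 ≠ q.1 ∧ p.1 ≠ q.2 ∧ p.2 ≠ q.1 ∧ p.2 ≠ q.2) l := by
    have hsymm : ∀ {x y : Finset (Finset V) × Finset (Finset V)},
        (x.1 ≠ y.1 ∧ x.1 ≠ y.2 ∧ x.2 ≠ y.1 ∧ x.2 ≠ y.2) →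
        (y.1 ≠ x.1 ∧ y.1 ≠ x.2 ∧ y.2 ≠ x.1 ∧ y.2 ≠ x.2) :=
      fun h => ⟨h.1.symm, h.2.2.1.symm, h.2.1.symm, h.2.2.2.symm⟩
    rw [hperm.pairwise_iff hsymm, List.pairwise_map]
    have key : ∀ T T', T ∈ LowF → T' ∈ LowF → T ≠ insert (cS σ f T') T' := by
      intro T T' hT hT' heq
      obtain ⟨hTK, hTL, hTc⟩ := (hLowF T).mp hT
      obtain ⟨hTK', hTL', hTc'⟩ := (hLowF T').mp hT'
      have hFn : Fn σ f T = Fn σ f T' := by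
        rw [heq]
        exact Fn_insert_of_img (cS_spec hB hσne hTK' hTL').1
      have hcT : cS σ f T = cS σ f T' := cS_congr hFn
      have hmem : cS σ f T ∈ insert (cS σ f T') T' := by
        rw [hcT]; exact Finset.mem_insert_self _ _
      rw [← heq] at hmem
      exact hTc hmem
    refine List.Pairwise.imp_of_mem ?_ (LowF.nodup_toList)
    intro S S' hS hS' hne
    have hS1 := Finset.mem_toList.mp hS
    have hS1' := Finset.mem_toList.mp hS'
    refine ⟨hne, key S S' hS1 hS1', (key S' S hS1' hS1 ·.symm), ?_⟩
    intro heq0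
    have heq : insert (cS σ f S) S = insert (cS σ f S') S' := heq0
    obtain ⟨hSK, hSL, hcSS⟩ := (hLowF S).mp hS1
    obtain ⟨hSK', hSL', hcSS'⟩ := (hLowF S').mp hS1'
    have hFn : Fn σ f S = Fn σ f S' := by
      have e1 : Fn σ f (insert (cS σ f S) S) = Fn σ f S :=
        Fn_insert_of_img (cS_spec hB hσne hSK hSL).1
      have e2 : Fn σ f (insert (cS σ f S') S') = Fn σ f S' :=
        Fn_insert_of_img (cS_spec hB hσne hSK' hSL').1
      rw [← e1, ← e2, heq]
    have hcT : cS σ f S = cS σ f S' := cS_congr hFn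
    apply hne
    have : (insert (cS σ f S) S).erase (cS σ f S)
        = (insert (cS σ f S') S').erase (cS σ f S') := by rw [heq, hcT]
    rwa [Finset.erase_insert hcSS, Finset.erase_insert hcSS'] at this
  -- order condition
  have horder : ∀ l₁ p l₂, l = l₁ ++ p :: l₂ → ∀ R ∈ dualMap σ f B,
      p.1 ⊂ R → R ≠ p.2 → ∃ q ∈ l₁, R = q.1 ∨ R = q.2 := by
    intro l₁ p l₂ hl R hRK hsubR hne
    have hp : p ∈ l := by
      rw [hl]; exact List.mem_append_right _ List.mem_cons_self
    obtain ⟨S, hSLow, rfl⟩ := (hmem_l p).mp hp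
    obtain ⟨hSK, hSL, hcSS⟩ := (hLowF S).mp hSLow
    have hsubR' : S ⊂ R := hsubR
    have hne' : R ≠ insert (cS σ f S) S := hne
    have hmS := mnn_spec hSK hSL
    have hRL : R ∉ dualMapPt σ f B := fun hRPt =>
      hmS.2.1 (hRPt.2 _ (hsubR'.subset hmS.1))
    obtain ⟨q, hq, hRq⟩ := hcov R hRK hRL
    obtain ⟨S0, hS0Low, rfl⟩ := (hmem_l q).mp hq
    obtain ⟨hS0K, hS0L, hcS0⟩ := (hLowF S0).mp hS0Low
    have hmS0 := mnn_spec hS0K hS0L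
    have hi0 := insert_cS_mem hB hσne hS0K hS0L
    have cardS : (insert (cS σ f S) S).card = S.card + 1 :=
      Finset.card_insert_of_notMem hcSS
    have cardS0 : (insert (cS σ f S0) S0).card = S0.card + 1 :=
      Finset.card_insert_of_notMem hcS0
    have hb1 : (insert (cS σ f S0) S0).card ≤ M := hcardK _ hi0.1
    have hb2 : (mnn σ f S0).card < C := hcardB _ (hS0K.1.2.1 hmS0.1)
    suffices hμ : μ (pr S0) < μ (pr S) by
      have hsorted : l.Pairwise r := List.pairwise_insertionSort r _
      rw [hl] at hsorted
      have hq' : pr S0 ∈ l₁ ++ pr S :: l₂ := by rw [← hl]; exact hq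
      rcases List.mem_append.mp hq' with h | h
      · exact ⟨_, h, hRq⟩
      · exfalso
        rcases List.mem_cons.mp h with heq | h
        · rw [heq] at hμ; exact lt_irrefl _ hμ
        · have hrel : r (pr S) (pr S0) :=
            (List.pairwise_cons.mp (List.pairwise_append.mp hsorted).2.1).1 _ h
          exact absurd (lt_of_lt_of_le hμ hrel) (lt_irrefl _)
    have hcardlt : S.card < R.card := Finset.card_lt_card hsubR'
    rcases hRq with hR1 | hR2
    · -- R is the lower face of its pair : S0 = R
      have hR1' : R = S0 := hR1
      show (M - (insert (cS σ f S0) S0).card) * C + (mnn σ f S0).card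
          < (M - (insert (cS σ f S) S).card) * C + (mnn σ f S).card
      apply mu_aux _ hb1 hb2
      rw [cardS, cardS0]
      rw [hR1'] at hcardlt
      omega
    · -- R is the upper face of its pair
      have hFn0 : Fn σ f R = Fn σ f S0 := by
        rw [hR2]
        exact Fn_insert_of_img (cS_spec hB hσne hS0K hS0L).1
      have hcR : cS σ f R = cS σ f S0 := cS_congr hFn0
      have hc0R : cS σ f R ∈ R := by
        rw [hcR, hR2]; exact Finset.mem_insert_self _ _
      have hRcard : R.card = S0.card + 1 := by rw [hR2]; exact cardS0
      by_cases hbig : S.card + 1 < R.card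
      · show (M - (insert (cS σ f S0) S0).card) * C + (mnn σ f S0).card
            < (M - (insert (cS σ f S) S).card) * C + (mnn σ f S).card
        apply mu_aux _ hb1 hb2
        rw [cardS, cardS0]
        omega
      · have hcard : R.card = S.card + 1 := by omega
        have hsd : (R \ S).card = 1 := by
          rw [Finset.card_sdiff_of_subset hsubR'.subset]; omega
        obtain ⟨γ, hγ⟩ := Finset.card_eq_one.mp hsd
        have hγR : γ ∈ R := (Finset.mem_sdiff.mp (hγ ▸ Finset.mem_singleton_self γ)).1
        have hγS : γ ∉ S := (Finset.mem_sdiff.mp (hγ ▸ Finset.mem_singleton_self γ)).2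
        have hRins : R = insert γ S := by
          apply Finset.Subset.antisymm
          · intro x hx
            by_cases hxS : x ∈ S
            · exact Finset.mem_insert_of_mem hxS
            · have : x ∈ R \ S := Finset.mem_sdiff.mpr ⟨hx, hxS⟩
              rw [hγ, Finset.mem_singleton] at this
              rw [this]; exact Finset.mem_insert_self _ _
          · exact Finset.insert_subset hγR hsubR'.subset
        have hγc : γ ≠ cS σ f S := by
          intro h
          apply hne'
          rw [hRins, h]
        have hγimg : γ.image f ≠ σ := by
          intro h
          have hFnS : Fn σ f R = Fn σ f S := by
            rw [hRins]; exact Fn_insert_of_img h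
          have hceq : cS σ f R = cS σ f S := cS_congr hFnS
          rw [hceq, hRins] at hc0R
          rcases Finset.mem_insert.mp hc0R with h' | h'
          · exact hγc h'.symm
          · exact hcSS h'
        have hmSR : mnn σ f S ∈ R := hsubR'.subset hmS.1
        have hγm : γ ≠ mnn σ f S := fun h => hγS (h ▸ hmS.1)
        have hcomp := hRK.1.2.2 (x := γ) (y := mnn σ f S)
          (by exact_mod_cast hγR) (by exact_mod_cast hmSR) hγm
        have hγsub : γ ⊆ mnn σ f S := by
          rcases hcomp with h | h
          · exact h
          · exfalso
            have hleast : mnn σ f R = mnn σ f S := by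
              rw [mnn]
              apply leastOf_eq
              · rw [hRins, Fn_insert_of_ne hγimg]
                exact Finset.mem_insert_of_mem
                  (Finset.mem_filter.mpr ⟨hmS.1, hmS.2.1⟩)
              · intro x hx
                rw [hRins, Fn_insert_of_ne hγimg] at hx
                rcases Finset.mem_insert.mp hx with rfl | hx
                · exact h
                · obtain ⟨hx1, hx2⟩ := Finset.mem_filter.mp hx
                  exact hmS.2.2 x hx1 hx2
            have hceq : cS σ f R = cS σ f S := by rw [cS, cS, hleast]
            rw [hceq, hRins] at hc0R
            rcases Finset.mem_insert.mp hc0R with h' | h'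
            · exact hγc h'.symm
            · exact hcSS h'
        have hγlt : γ.card < (mnn σ f S).card :=
          Finset.card_lt_card (Finset.ssubset_iff_subset_ne.mpr ⟨hγsub, hγm⟩)
        have hmnnR : mnn σ f R = γ := by
          rw [mnn]
          apply leastOf_eq
          · rw [hRins, Fn_insert_of_ne hγimg]
            exact Finset.mem_insert_self _ _
          · intro x hx
            rw [hRins, Fn_insert_of_ne hγimg] at hx
            rcases Finset.mem_insert.mp hx with rfl | hx
            · exact subset_rfl
            · obtain ⟨hx1, hx2⟩ := Finset.mem_filter.mp hx
              exact hγsub.trans (hmS.2.2 x hx1 hx2)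
        have hm0R : mnn σ f S0 = mnn σ f R := mnn_congr hFn0.symm
        show (M - (insert (cS σ f S0) S0).card) * C + (mnn σ f S0).card
            < (M - (insert (cS σ f S) S).card) * C + (mnn σ f S).card
        have e1 : (insert (cS σ f S0) S0).card = (insert (cS σ f S) S).card := by
          omega
        rw [e1, hm0R, hmnnR]
        exact Nat.add_lt_add_left hγlt _
  exact collapse_of_list l (dualMap σ f B) (dualMapPt σ f B)
    hLK hpairs hcov hpw horder
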